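/- Minimizing D(P∥P') over all distributions P' that factor according to a spanning tree on p vertices (with pairwise marginals equal to those of P) is equivalent to maximizing the sum Σ_{{i,j}∈E} I(X_i;X_j) of mutual information values over the edge set E of the tree. -/

import Mathlib

open Finset Real

/-- Minimizing `D(P‖P'_T)` over spanning trees `T` is equivalent to
maximizing `∑_{{i,j}∈E} I(Xᵢ;Xⱼ)`: there is a constant `C` depending only on `P` such
that `D(P‖P'_T) = C - ∑_{{i,j}∈E} I(Xᵢ;Xⱼ)` for every spanning tree, and hence the KL
divergence comparison between two trees is the reversed comparison of their
mutual-information sums. -/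
theorem chow_liu_equivalence
    (p : ℕ) (val : Fin p → Type) [∀ i, Fintype (val i)] [∀ i, DecidableEq (val i)]
    (P : (∀ i, val i) → ℝ) (hPpos : ∀ ω, 0 < P ω) (hPsum : ∑ ω, P ω = 1)
    (P1 : ∀ i, val i → ℝ)
    (hP1 : ∀ i a, P1 i a = ∑ ω ∈ univ.filter (fun ω : ∀ i, val i => ω i = a), P ω)
    (P2 : ∀ i j, val i → val j → ℝ)
    (hP2 : ∀ i j a b,
      P2 i j a b = ∑ ω ∈ univ.filter (fun ω : ∀ i, val i => ω i = a ∧ ω j = b), P ω)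
    (D : Finset (Fin p × Fin p) → ℝ)
    (hD : ∀ E, D E = ∑ ω, P ω * Real.log (P ω /
      ((∏ i, P1 i (ω i)) *
        ∏ e ∈ E, P2 e.1 e.2 (ω e.1) (ω e.2) / (P1 e.1 (ω e.1) * P1 e.2 (ω e.2)))))
    (MI : Finset (Fin p × Fin p) → ℝ)
    (hMI : ∀ E, MI E = ∑ e ∈ E, ∑ a, ∑ b,
      P2 e.1 e.2 a b * Real.log (P2 e.1 e.2 a b / (P1 e.1 a * P1 e.2 b)))
    (IsSpanningTree : Finset (Fin p × Fin p) → Prop)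
    (hST : ∀ E, IsSpanningTree E ↔ (∀ e ∈ E, e.1 < e.2) ∧
      (SimpleGraph.fromRel (fun i j => (i, j) ∈ E ∨ (j, i) ∈ E)).IsTree) :
    ∃ C : ℝ, (∀ E, IsSpanningTree E → D E = C - MI E) ∧
      (∀ E₁ E₂, IsSpanningTree E₁ → IsSpanningTree E₂ → (D E₁ ≤ D E₂ ↔ MI E₂ ≤ MI E₁)) := by
  classical
  -- the full configuration space is nonempty
  have hne : (univ : Finset (∀ i, val i)).Nonempty := by
    by_contra h
    rw [Finset.not_nonempty_iff_eq_empty] at h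
    rw [h, Finset.sum_empty] at hPsum
    norm_num at hPsum
  obtain ⟨ω0, -⟩ := hne
  -- positivity of marginals
  have hP1pos : ∀ i a, 0 < P1 i a := by
    intro i a
    rw [hP1]
    refine Finset.sum_pos (fun ω _ => hPpos ω) ⟨Function.update ω0 i a, ?_⟩
    simp [Function.update_self]
  have hP2pos : ∀ (i j : Fin p) (ω : ∀ i, val i), 0 < P2 i j (ω i) (ω j) := by
    intro i j ω
    rw [hP2]
    exact Finset.sum_pos (fun ω _ => hPpos ω) ⟨ω, by simp⟩
  -- fiberwise summation lemma
  have hfiber : ∀ (i j : Fin p) (f : val i → val j → ℝ),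
      ∑ ω, P ω * f (ω i) (ω j) = ∑ a, ∑ b,
        (∑ ω ∈ univ.filter (fun ω : ∀ i, val i => ω i = a ∧ ω j = b), P ω) * f a b := by
    intro i j f
    rw [← Finset.sum_fiberwise univ (fun ω : ∀ i, val i => (ω i, ω j))
      (fun ω => P ω * f (ω i) (ω j)), Fintype.sum_prod_type]
    refine Finset.sum_congr rfl fun a _ => Finset.sum_congr rfl fun b _ => ?_
    rw [Finset.sum_mul]
    refine Finset.sum_congr (by ext ω; simp [Prod.ext_iff]) fun ω hω => ?_
    simp only [Finset.mem_filter] at hω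
    rw [hω.2.1, hω.2.2]
  set C := ∑ ω, P ω * Real.log (P ω / ∏ i, P1 i (ω i)) with hCdef
  have hC : ∀ E, IsSpanningTree E → D E = C - MI E := by
    intro E _
    rw [hD, hMI, eq_sub_iff_add_eq]
    have key : ∀ ω, P ω * Real.log (P ω /
        ((∏ i, P1 i (ω i)) *
          ∏ e ∈ E, P2 e.1 e.2 (ω e.1) (ω e.2) / (P1 e.1 (ω e.1) * P1 e.2 (ω e.2))))
        = P ω * Real.log (P ω / ∏ i, P1 i (ω i))
          - ∑ e ∈ E, P ω * Real.log
              (P2 e.1 e.2 (ω e.1) (ω e.2) / (P1 e.1 (ω e.1) * P1 e.2 (ω e.2))) := by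
      intro ω
      have hA : 0 < ∏ i, P1 i (ω i) := Finset.prod_pos fun i _ => hP1pos i (ω i)
      have hBpos : ∀ e ∈ E, 0 < P2 e.1 e.2 (ω e.1) (ω e.2) /
          (P1 e.1 (ω e.1) * P1 e.2 (ω e.2)) := fun e _ =>
        div_pos (hP2pos e.1 e.2 ω) (mul_pos (hP1pos _ _) (hP1pos _ _))
      have hB : 0 < ∏ e ∈ E, P2 e.1 e.2 (ω e.1) (ω e.2) /
          (P1 e.1 (ω e.1) * P1 e.2 (ω e.2)) := Finset.prod_pos hBpos
      rw [div_mul_eq_div_div, Real.log_div (div_pos (hPpos ω) hA).ne' hB.ne',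
        Real.log_prod (fun e he => (hBpos e he).ne'), mul_sub, Finset.mul_sum]
    rw [Finset.sum_congr rfl fun ω _ => key ω, Finset.sum_sub_distrib]
    have hS : ∑ ω, ∑ e ∈ E, P ω * Real.log
        (P2 e.1 e.2 (ω e.1) (ω e.2) / (P1 e.1 (ω e.1) * P1 e.2 (ω e.2)))
        = ∑ e ∈ E, ∑ a, ∑ b,
          P2 e.1 e.2 a b * Real.log (P2 e.1 e.2 a b / (P1 e.1 a * P1 e.2 b)) := by
      rw [Finset.sum_comm]
      refine Finset.sum_congr rfl fun e _ => ?_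
      rw [hfiber e.1 e.2 (fun a b => Real.log (P2 e.1 e.2 a b / (P1 e.1 a * P1 e.2 b)))]
      refine Finset.sum_congr rfl fun a _ => Finset.sum_congr rfl fun b _ => ?_
      rw [hP2]
    rw [hS, hCdef]
    ring
  refine ⟨C, hC, fun E₁ E₂ h₁ h₂ => ?_⟩
  rw [hC E₁ h₁, hC E₂ h₂]
  constructor <;> intro h <;> linarith
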